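/- Flatness of local Nash equilibria in vector potential games: let the coordinate set {1, …, n} be partitioned into blocks I₁, …, I_M, let u₁, …, u_M : ℝⁿ → ℝ be twice continuously differentiable, and suppose ∑_{m=1}^M ∑_{i ∈ I_m} ∂²u_m/∂xᵢ²(p) = 0 at a point p ∈ ℝⁿ (this holds in particular when Div(Du) = 0 everywhere). Suppose p is a local Nash equilibrium: for every player m there is a neighborhood of p such that u_m(p) ≥ u_m(q) for every q in that neighborhood that agrees with p on all coordinates outside I_m. Then ∂²u_m/∂xᵢ²(p) = 0 for every player m and every coordinate i ∈ I_m. -/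

import Mathlib

lemma aux_second_deriv_nonpos (f : ℝ → ℝ) (c : ℝ) (hf : Differentiable ℝ f)
    (hf' : HasDerivAt (deriv f) c 0) (hmax : IsLocalMax f 0) : c ≤ 0 := by
  by_contra hc
  push_neg at hc
  have hd0 : deriv f 0 = 0 := hmax.deriv_eq_zero
  have hslope : ∀ᶠ t in nhdsWithin (0:ℝ) {(0:ℝ)}ᶜ, 0 < slope (deriv f) 0 t :=
    (hasDerivAt_iff_tendsto_slope.mp hf').eventually (eventually_gt_nhds hc)
  rw [eventually_nhdsWithin_iff] at hslope
  rw [Metric.eventually_nhds_iff] at hslope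
  obtain ⟨δ, hδ, hsl⟩ := hslope
  obtain ⟨δ', hδ', hm⟩ := Metric.eventually_nhds_iff.mp hmax
  set r := min δ δ' / 2 with hr
  have hrpos : 0 < r := by positivity
  have hmono : StrictMonoOn f (Set.Icc 0 r) := by
    apply strictMonoOn_of_deriv_pos (convex_Icc 0 r) (hf.continuous.continuousOn)
    intro t ht
    rw [interior_Icc] at ht
    have htne : t ∈ ({(0:ℝ)}ᶜ : Set ℝ) := by
      simp [ne_of_gt ht.1]
    have hdist : dist t 0 < δ := by
      rw [Real.dist_eq, sub_zero, abs_of_pos ht.1]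
      have := min_le_left δ δ'
      have := ht.2
      simp only [hr] at *
      linarith
    have := hsl hdist htne
    rw [slope_def_field, hd0, sub_zero, sub_zero] at this
    rcases div_pos_iff.mp this with ⟨h1, _⟩ | ⟨_, h2⟩
    · exact h1
    · linarith [ht.1]
  have h1 : f 0 < f r := hmono (Set.left_mem_Icc.mpr hrpos.le) (Set.right_mem_Icc.mpr hrpos.le) hrpos
  have h2 : f r ≤ f 0 := by
    apply hm
    rw [Real.dist_eq, sub_zero, abs_of_pos hrpos]
    have := min_le_right δ δ'
    simp only [hr] at *
    linarith
  linarith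

lemma aux_key (n M : ℕ)
    (player : Fin n → Fin M) (u : Fin M → (Fin n → ℝ) → ℝ)
    (hu : ∀ m, ContDiff ℝ 2 (u m)) (p : Fin n → ℝ)
    (hnash : ∀ m : Fin M, ∃ ε > (0 : ℝ), ∀ q : Fin n → ℝ, dist q p < ε →
      (∀ i, player i ≠ m → q i = p i) → u m q ≤ u m p) (i : Fin n) :
    fderiv ℝ (fun x => fderiv ℝ (u (player i)) x (Pi.single i 1)) p (Pi.single i 1) ≤ 0 := by
  set m := player i with hm
  set e : Fin n → ℝ := Pi.single i 1 with he
  set L : ℝ → (Fin n → ℝ) := fun t => p + t • e with hL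
  have hLd : ∀ t : ℝ, HasDerivAt L e t := by
    intro t
    have h1 : HasDerivAt (fun t : ℝ => t • e) ((1:ℝ) • e) t :=
      (hasDerivAt_id t).smul_const e
    simpa [hL] using h1.const_add p
  have hum : Differentiable ℝ (u m) := (hu m).differentiable (by norm_num)
  set f : ℝ → ℝ := fun t => u m (L t) with hf
  have hfd : ∀ t : ℝ, HasDerivAt f (fderiv ℝ (u m) (L t) e) t := fun t =>
    ((hum (L t)).hasFDerivAt).comp_hasDerivAt t (hLd t)
  set g : (Fin n → ℝ) → ℝ := fun x => fderiv ℝ (u m) x e with hg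
  have hderivf : deriv f = fun t => g (L t) := funext fun t => (hfd t).deriv
  have hgd : DifferentiableAt ℝ g p := by
    have h1 : ContDiff ℝ 1 (fderiv ℝ (u m)) := (hu m).fderiv_right (by norm_num)
    exact ((ContinuousLinearMap.apply ℝ ℝ e).differentiable.comp
      (h1.differentiable one_ne_zero)) p
  have hL0 : L 0 = p := by simp [hL]
  have hf'' : HasDerivAt (deriv f) (fderiv ℝ g p e) 0 := by
    rw [hderivf]
    have hgd' : HasFDerivAt g (fderiv ℝ g p) (L 0) := hL0 ▸ hgd.hasFDerivAt
    exact hgd'.comp_hasDerivAt 0 (hLd 0)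
  have hfdiff : Differentiable ℝ f := fun t => (hfd t).differentiableAt
  -- local max
  obtain ⟨ε, hε, hN⟩ := hnash m
  have hmax : IsLocalMax f 0 := by
    rw [IsLocalMax, IsMaxFilter, Metric.eventually_nhds_iff]
    refine ⟨ε / (‖e‖ + 1), by positivity, fun t ht => ?_⟩
    have hdist : dist (L t) p < ε := by
      have : L t - p = t • e := by simp [hL]
      rw [dist_eq_norm, this, norm_smul]
      rw [Real.dist_eq, sub_zero] at ht
      calc ‖t‖ * ‖e‖ ≤ |t| * (‖e‖ + 1) := by
            apply mul_le_mul_of_nonneg_left (by linarith) (abs_nonneg t)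
        _ < ε / (‖e‖ + 1) * (‖e‖ + 1) := by
            apply mul_lt_mul_of_pos_right ht (by positivity)
        _ = ε := by field_simp
    have hfix : ∀ j, player j ≠ m → L t j = p j := by
      intro j hj
      have hji : j ≠ i := fun h => hj (h ▸ rfl)
      simp [hL, he, Pi.single_eq_of_ne hji]
    have := hN (L t) hdist hfix
    simpa [hf, hL0] using this
  have := aux_second_deriv_nonpos f (fderiv ℝ g p e) hfdiff hf'' hmax
  exact this



/-- Flatness of local Nash equilibria in vector potential games: the coordinates `Fin n`
are partitioned into blocks via `player : Fin n → Fin M` (player `m` controls the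
coordinates `i` with `player i = m`); if the utilities `u m` are `C²` and the trace of
own-coordinate second derivatives vanishes at `p`
(`∑ᵢ ∂²u_(player i)/∂xᵢ²(p) = 0`, which holds when `Div(Du) = 0`), and `p` is a local
Nash equilibrium (no player improves by a small unilateral deviation), then
`∂²u_(player i)/∂xᵢ²(p) = 0` for every coordinate `i`. -/
theorem flat_local_nash_of_div_free (n M : ℕ)
    (player : Fin n → Fin M) (u : Fin M → (Fin n → ℝ) → ℝ)
    (hu : ∀ m, ContDiff ℝ 2 (u m)) (p : Fin n → ℝ)
    (htrace : ∑ i : Fin n,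
        fderiv ℝ (fun x => fderiv ℝ (u (player i)) x (Pi.single i 1)) p (Pi.single i 1)
      = 0)
    (hnash : ∀ m : Fin M, ∃ ε > (0 : ℝ), ∀ q : Fin n → ℝ, dist q p < ε →
      (∀ i, player i ≠ m → q i = p i) → u m q ≤ u m p) :
    ∀ i : Fin n,
      fderiv ℝ (fun x => fderiv ℝ (u (player i)) x (Pi.single i 1)) p (Pi.single i 1)
        = 0 := by
  intro i
  have key : ∀ j ∈ Finset.univ, fderiv ℝ
      (fun x => fderiv ℝ (u (player j)) x (Pi.single j 1)) p (Pi.single j 1) ≤ 0 :=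
    fun j _ => aux_key n M player u hu p hnash j
  exact (Finset.sum_eq_zero_iff_of_nonpos key).mp htrace i (Finset.mem_univ i)
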